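/- Let ħ > 0 and let Σ be a real symmetric positive definite 2n×2n matrix with blocks Σ = [[Σ_XX, Σ_XP],[Σ_PX, Σ_PP]] such that the complex Hermitian matrix Σ + (iħ/2)J is positive semidefinite. Let X = {x ∈ ℝⁿ : (1/2) Σ_XX⁻¹ x·x ≤ 1} and P = {p ∈ ℝⁿ : (1/2) Σ_PP⁻¹ p·p ≤ 1} be the orthogonal projections of the covariance ellipsoid Ω_Σ onto the x-space and p-space. Then the ħ-polar dual X^ħ = {p ∈ ℝⁿ : sup_{x∈X} p·x ≤ ħ} satisfies X^ħ ⊆ P. -/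

import Mathlib

open Matrix ComplexOrder MeasureTheory

noncomputable section

/-- Phase space ℝ^{2n} ≃ ℝⁿ × ℝⁿ, with coordinates z = (x,p). -/
abbrev PS (n : ℕ) := Fin n ⊕ Fin n → ℝ

/-- The standard symplectic matrix J = [[0, I], [-I, 0]]. -/
def Jmat (n : ℕ) : Matrix (Fin n ⊕ Fin n) (Fin n ⊕ Fin n) ℝ :=
  Matrix.fromBlocks 0 1 (-1) 0

/-- The standard symplectic form ω(z,z′) = (Jz)·z′. -/
def symp (n : ℕ) (z z' : PS n) : ℝ := (Jmat n).mulVec z ⬝ᵥ z'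

/-- The symplectic group Sp(n) = {S : SᵀJS = J}. -/
def Sp (n : ℕ) : Set (Matrix (Fin n ⊕ Fin n) (Fin n ⊕ Fin n) ℝ) :=
  {S | Sᵀ * Jmat n * S = Jmat n}

namespace PolarDualAux

variable {n : ℕ}

lemma block_posdef_xx {Sxx Sxp Spx Spp : Matrix (Fin n) (Fin n) ℝ}
    (hSig : (Matrix.fromBlocks Sxx Sxp Spx Spp).PosDef) : Sxx.PosDef := by
  refine Matrix.PosDef.of_dotProduct_mulVec_pos ?_ ?_
  · exact (Matrix.isHermitian_fromBlocks_iff.mp hSig.1).1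
  · intro x hx
    have hz : (Sum.elim x 0 : Fin n ⊕ Fin n → ℝ) ≠ 0 := by
      intro h
      apply hx
      funext i
      exact congrFun h (Sum.inl i)
    have := hSig.dotProduct_mulVec_pos hz
    simpa [Matrix.fromBlocks_mulVec, sumElim_dotProduct_sumElim] using this

lemma block_posdef_pp {Sxx Sxp Spx Spp : Matrix (Fin n) (Fin n) ℝ}
    (hSig : (Matrix.fromBlocks Sxx Sxp Spx Spp).PosDef) : Spp.PosDef := by
  refine Matrix.PosDef.of_dotProduct_mulVec_pos ?_ ?_
  · exact (Matrix.isHermitian_fromBlocks_iff.mp hSig.1).2.2.2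
  · intro x hx
    have hz : (Sum.elim 0 x : Fin n ⊕ Fin n → ℝ) ≠ 0 := by
      intro h
      apply hx
      funext i
      exact congrFun h (Sum.inr i)
    have := hSig.dotProduct_mulVec_pos hz
    simpa [Matrix.fromBlocks_mulVec, sumElim_dotProduct_sumElim] using this

lemma ofReal_dot (A : Matrix (Fin n) (Fin n) ℝ) (x y : Fin n → ℝ) :
    (fun i => (x i : ℂ)) ⬝ᵥ ((A.map Complex.ofReal) *ᵥ (fun i => (y i : ℂ)))
      = ((x ⬝ᵥ A *ᵥ y : ℝ) : ℂ) := by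
  have h1 : (A.map Complex.ofReal) *ᵥ (fun i => (y i : ℂ))
      = fun i => ((A *ᵥ y) i : ℂ) := by
    funext i
    exact (RingHom.map_mulVec Complex.ofRealHom A y i).symm
  rw [h1]
  have := RingHom.map_dotProduct Complex.ofRealHom x (A *ᵥ y)
  simpa [Function.comp_def] using this.symm

set_option linter.unreachableTactic false in
set_option linter.unusedTactic false in
lemma key_ineq (ℏ s : ℝ) (Sxx Sxp Spx Spp : Matrix (Fin n) (Fin n) ℝ)
    (hquant : ((Matrix.fromBlocks Sxx Sxp Spx Spp).map (Complex.ofReal) +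
        (((ℏ : ℂ) / 2) * Complex.I) • (Jmat n).map (Complex.ofReal)).PosSemidef)
    (u v : Fin n → ℝ) :
    0 ≤ u ⬝ᵥ Sxx *ᵥ u + s^2 * (v ⬝ᵥ Spp *ᵥ v)
        - (ℏ * s / 2) * (u ⬝ᵥ v) - (ℏ * s / 2) * (v ⬝ᵥ u) := by
  set a : Fin n → ℂ := fun i => (u i : ℂ) with ha
  set vc : Fin n → ℂ := fun i => (v i : ℂ) with hvc
  set c : ℂ := (s : ℂ) * Complex.I with hc
  set γ : ℂ := ((ℏ : ℂ) / 2) * Complex.I with hγ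
  set b : Fin n → ℂ := c • vc with hb
  set w : Fin n ⊕ Fin n → ℂ := Sum.elim a b with hw
  have hsw : star w = Sum.elim a ((-c) • vc) := by
    funext i
    cases i <;>
      simp [hw, ha, hb, hvc, hc, Pi.star_apply, Complex.star_def, _root_.map_mul,
        Complex.conj_ofReal, Complex.conj_I] <;> ring
  have hJ : (Jmat n).map Complex.ofReal = Matrix.fromBlocks 0 1 (-1) 0 := by
    ext i j
    rcases i with i | i <;> rcases j with j | j <;>
      simp [Jmat, Matrix.fromBlocks, Matrix.one_apply, apply_ite Complex.ofReal]
  have hval : star w ⬝ᵥ (((Matrix.fromBlocks Sxx Sxp Spx Spp).map (Complex.ofReal) +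
        (((ℏ : ℂ) / 2) * Complex.I) • (Jmat n).map (Complex.ofReal)) *ᵥ w)
      = ((u ⬝ᵥ Sxx *ᵥ u : ℝ) : ℂ) + c * ((u ⬝ᵥ Sxp *ᵥ v : ℝ) : ℂ)
        + (-c) * ((v ⬝ᵥ Spx *ᵥ u : ℝ) : ℂ) + (-c) * c * ((v ⬝ᵥ Spp *ᵥ v : ℝ) : ℂ)
        + (((ℏ / 2 : ℝ) : ℂ) * Complex.I) * (c * ((u ⬝ᵥ v : ℝ) : ℂ)
            + (-c) * (-((v ⬝ᵥ u : ℝ) : ℂ))) := by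
    rw [Matrix.add_mulVec, Matrix.smul_mulVec, dotProduct_add,
      dotProduct_smul, Matrix.fromBlocks_map, hJ, Matrix.fromBlocks_mulVec,
      Matrix.fromBlocks_mulVec]
    have e1 : w ∘ Sum.inl = a := rfl
    have e2 : w ∘ Sum.inr = b := rfl
    rw [e1, e2, hsw]
    rw [sumElim_dotProduct_sumElim, sumElim_dotProduct_sumElim]
    have hdvu : (fun i => (v i : ℂ)) ⬝ᵥ (fun i => (u i : ℂ)) = ((v ⬝ᵥ u : ℝ) : ℂ) := by
      simpa [Function.comp_def] using (RingHom.map_dotProduct Complex.ofRealHom v u).symm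
    have hduv : (fun i => (u i : ℂ)) ⬝ᵥ (fun i => (v i : ℂ)) = ((u ⬝ᵥ v : ℝ) : ℂ) := by
      simpa [Function.comp_def] using (RingHom.map_dotProduct Complex.ofRealHom u v).symm
    simp only [Matrix.zero_mulVec, Matrix.one_mulVec, Matrix.neg_mulVec, zero_add, add_zero,
      dotProduct_add, dotProduct_neg, hb, ha, hvc, dotProduct_zero,
      zero_dotProduct, Matrix.mulVec_smul,
      smul_dotProduct, dotProduct_smul, smul_eq_mul,
      ofReal_dot, hdvu, hduv]
    push_cast
    ring
  have h0 := hquant.re_dotProduct_nonneg w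
  rw [hval] at h0
  simp only [RCLike.re_to_complex, hc, Complex.add_re, Complex.mul_re, Complex.mul_im,
    Complex.add_im, Complex.neg_re, Complex.neg_im, Complex.ofReal_re, Complex.ofReal_im,
    Complex.I_re, Complex.I_im] at h0
  ring_nf at h0 ⊢
  linarith [h0]

end PolarDualAux

/-- For a quantum covariance matrix (Σ + (iℏ/2)J ⪰ 0), the ℏ-polar dual of the
x-projection X of the covariance ellipsoid is contained in the p-projection P. -/
theorem polar_dual_of_projection_subset (n : ℕ) (ℏ : ℝ) (hℏ : 0 < ℏ)
    (Sxx Sxp Spx Spp : Matrix (Fin n) (Fin n) ℝ)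
    (hSig : (Matrix.fromBlocks Sxx Sxp Spx Spp).PosDef)
    (hquant : ((Matrix.fromBlocks Sxx Sxp Spx Spp).map (Complex.ofReal) +
        (((ℏ : ℂ) / 2) * Complex.I) • (Jmat n).map (Complex.ofReal)).PosSemidef) :
    {p : Fin n → ℝ |
        ∀ x : Fin n → ℝ, (1 / 2 : ℝ) * (Sxx⁻¹.mulVec x ⬝ᵥ x) ≤ 1 → p ⬝ᵥ x ≤ ℏ}
      ⊆ {p : Fin n → ℝ | (1 / 2 : ℝ) * (Spp⁻¹.mulVec p ⬝ᵥ p) ≤ 1} := by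
  intro p hp
  simp only [Set.mem_setOf_eq] at hp ⊢
  by_cases hp0 : p = 0
  · simp [hp0]
  have hxxpd := PolarDualAux.block_posdef_xx hSig
  have hpppd := PolarDualAux.block_posdef_pp hSig
  have hα : 0 < p ⬝ᵥ Sxx *ᵥ p := by simpa using hxxpd.dotProduct_mulVec_pos hp0
  set α := p ⬝ᵥ Sxx *ᵥ p with hαdef
  -- Step 1 : 2α ≤ ℏ²
  have hSxxinv : Sxx⁻¹ * Sxx = 1 := Matrix.nonsing_inv_mul _ hxxpd.det_pos.ne'.isUnit
  set c := Real.sqrt (2 / α) with hcdef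
  have hc2 : c ^ 2 = 2 / α := Real.sq_sqrt (by positivity)
  have hcpos : 0 < c := Real.sqrt_pos.mpr (by positivity)
  set x := c • (Sxx *ᵥ p) with hxdef
  have hinvx : Sxx⁻¹ *ᵥ x = c • p := by
    rw [hxdef, Matrix.mulVec_smul, Matrix.mulVec_mulVec, hSxxinv, Matrix.one_mulVec]
  have hmem : (1 / 2 : ℝ) * (Sxx⁻¹.mulVec x ⬝ᵥ x) ≤ 1 := by
    rw [hinvx, hxdef, smul_dotProduct, dotProduct_smul, smul_eq_mul, smul_eq_mul,
      ← hαdef]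
    have : c * (c * α) = 2 := by
      have : c * c * α = 2 := by
        have := hc2
        rw [pow_two] at this
        rw [this]
        field_simp
      nlinarith [this]
    nlinarith [this]
  have hpx := hp x hmem
  have hpxval : p ⬝ᵥ x = c * α := by
    rw [hxdef, dotProduct_smul, smul_eq_mul, hαdef]
  rw [hpxval] at hpx
  have hcα : 0 ≤ c * α := by positivity
  have h2α : 2 * α ≤ ℏ ^ 2 := by
    have hsq : (c * α) ^ 2 ≤ ℏ ^ 2 := pow_le_pow_left₀ hcα hpx 2
    have : (c * α) ^ 2 = 2 * α := by
      rw [mul_pow, hc2]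
      field_simp
    linarith [this ▸ hsq]
  -- Step 2 : key inequality with u = p, v = Spp⁻¹ p
  have hSppinv : Spp * Spp⁻¹ = 1 := Matrix.mul_nonsing_inv _ hpppd.det_pos.ne'.isUnit
  set q := Spp⁻¹ *ᵥ p with hqdef
  have hq : Spp *ᵥ q = p := by
    rw [hqdef, Matrix.mulVec_mulVec, hSppinv, Matrix.one_mulVec]
  have key := PolarDualAux.key_ineq ℏ (ℏ / 2) Sxx Sxp Spx Spp hquant p q
  rw [hq] at key
  have hcomm : p ⬝ᵥ q = q ⬝ᵥ p := dotProduct_comm p q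
  rw [hcomm] at key
  show (1 / 2 : ℝ) * (q ⬝ᵥ p) ≤ 1
  nlinarith [key, h2α, mul_pos hℏ hℏ, sq_nonneg ℏ]
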